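/- Let P = (x0, y0) be an affine point on the elliptic curve C with x0 ≠ 0. Then, in the group of points of C, P + (0,0) is the affine point ((1−d)²/x0, −(1−d)²·y0/x0²). In particular, translation by the 2-torsion point (0,0) acts on projective x-coordinates [k1, k2] (where x = k2/k1) by [k1, k2] ↦ [k2, (1−d)²·k1]. -/

import Mathlib

open WeierstrassCurve

/-- The elliptic curve `C : y² = x(x² + 2(1+d)x + (1−d)²)` in Weierstrass form. -/
def edwardsWeierstrass {K : Type*} [Field K] (d : K) : WeierstrassCurve.Affine K :=
  { a₁ := 0, a₂ := 2 * (1 + d), a₃ := 0, a₄ := (1 - d) ^ 2, a₆ := 0 }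

lemma some_congr' {K : Type*} [Field K] {W : WeierstrassCurve.Affine K} {x y x' y' : K}
    (hx : x = x') (hy : y = y') (h : W.Nonsingular x y) (h' : W.Nonsingular x' y') :
    Affine.Point.some _ _ h = Affine.Point.some _ _ h' := by subst hx hy; rfl

open Classical in
/-- If `P = (x0, y0)` is an affine point on `C` with `x0 ≠ 0`, then
`P + (0,0)` is the affine point `((1−d)²/x0, −(1−d)²·y0/x0²)`.  In particular, translation
by `(0,0)` acts on projective x-coordinates `[k1, k2]` (with `x = k2/k1`) by
`[k1, k2] ↦ [k2, (1−d)² k1]`. -/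
theorem stmt_10 {K : Type*} [Field K] (hchar : (2 : K) ≠ 0) (d : K)
    (hd0 : d ≠ 0) (hd1 : d ≠ 1) (x0 y0 : K) (hx0 : x0 ≠ 0)
    (hP : (edwardsWeierstrass d).Nonsingular x0 y0)
    (hE1 : (edwardsWeierstrass d).Nonsingular 0 0) :
    ∃ hQ : (edwardsWeierstrass d).Nonsingular ((1 - d) ^ 2 / x0)
        (-(1 - d) ^ 2 * y0 / x0 ^ 2),
      Affine.Point.some _ _ hP + Affine.Point.some _ _ hE1 = Affine.Point.some _ _ hQ ∧
      ∀ k1 k2 : K, k1 ≠ 0 → x0 = k2 / k1 →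
        (1 - d) ^ 2 / x0 = (1 - d) ^ 2 * k1 / k2 := by
  let W := edwardsWeierstrass d
  have hW : W = edwardsWeierstrass d := rfl
  have heq : y0 ^ 2 = x0 ^ 3 + 2 * (1 + d) * x0 ^ 2 + (1 - d) ^ 2 * x0 := by
    have := hP.1
    rw [Affine.equation_iff] at this
    simp only [hW, edwardsWeierstrass] at this
    linear_combination this
  have hL : W.slope x0 0 y0 0 = y0 / x0 := by
    rw [Affine.slope_of_X_ne hx0]
    simp
  have hx3 : W.addX x0 0 (W.slope x0 0 y0 0) = (1 - d) ^ 2 / x0 := by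
    rw [hL, Affine.addX]
    simp only [hW, edwardsWeierstrass]
    field_simp
    linear_combination heq
  have hy3 : W.addY x0 0 y0 (W.slope x0 0 y0 0) = -(1 - d) ^ 2 * y0 / x0 ^ 2 := by
    rw [Affine.addY, Affine.negY, Affine.negAddY, hx3, hL]
    simp only [hW, edwardsWeierstrass]
    field_simp
    ring
  have h3 := Affine.nonsingular_add hP hE1 (fun h => absurd h.1 hx0)
  have hQ : W.Nonsingular ((1 - d) ^ 2 / x0) (-(1 - d) ^ 2 * y0 / x0 ^ 2) := by
    rwa [hx3, hy3] at h3
  refine ⟨hQ, ?_, ?_⟩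
  · rw [Affine.Point.add_of_X_ne hx0]
    exact some_congr' hx3 hy3 _ _
  · intro k1 k2 hk1 hx
    have hk2 : k2 ≠ 0 := fun h => hx0 (by simp [hx, h])
    rw [hx]
    field_simp
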